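/- arXiv:2605.17599 — 5 statements merged into one kernel-verified Lean document; each statement's English description precedes it below -/
import Mathlib

section
/- Fix ẑ ∈ ℝ^m, let A(ẑ) ∈ GL(n,ℝ), b(ẑ) ∈ ℝ^n, τ_R > 0, τ_ψ > 0, and let F : ℝ^m × ℝ^n → ℝ be C¹ with L_F-Lipschitz gradient (‖∇F(w₁) − ∇F(w₂)‖₂ ≤ L_F‖w₁ − w₂‖₂ for all w₁, w₂). Let y*_ẑ = A(ẑ)⁻¹b(ẑ), 𝒴_ẑ = { y : ‖A(ẑ)y − b(ẑ)‖₂ ≤ τ_R }, C_R(ẑ) = ‖A(ẑ)⁻¹‖₂. For y ∈ ℝ^n, let ψ*_{ẑ,y} be the unique solution of A(ẑ)ᵀψ = ∇_y F(ẑ,y), and let 𝒜_{ẑ,y} = { ψ ∈ ℝ^n : ‖A(ẑ)ᵀψ − ∇_y F(ẑ,y)‖₂ ≤ τ_ψ }. Then for every y ∈ 𝒴_ẑ and every ψ ∈ 𝒜_{ẑ,y}, ‖ψ − ψ*_{ẑ,y*_ẑ}‖₂ ≤ C_R(ẑ)² · L_F · τ_R + C_R(ẑ) · τ_ψ. -/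
noncomputable def gradYF {m n : ℕ}
    (F : WithLp 2 (EuclideanSpace ℝ (Fin m) × EuclideanSpace ℝ (Fin n)) → ℝ)
    (z : EuclideanSpace ℝ (Fin m)) (y : EuclideanSpace ℝ (Fin n)) :
    EuclideanSpace ℝ (Fin n) :=
  gradient (fun y' => F ((WithLp.equiv 2 _).symm (z, y'))) y

section aux
variable {m n : ℕ}
local notation "E" => EuclideanSpace ℝ (Fin m)
local notation "G" => EuclideanSpace ℝ (Fin n)
local notation "W" => WithLp 2 (EuclideanSpace ℝ (Fin m) × EuclideanSpace ℝ (Fin n))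

noncomputable def Lmap : EuclideanSpace ℝ (Fin n) →L[ℝ]
    WithLp 2 (EuclideanSpace ℝ (Fin m) × EuclideanSpace ℝ (Fin n)) :=
  ((WithLp.prodContinuousLinearEquiv 2 ℝ (EuclideanSpace ℝ (Fin m))
      (EuclideanSpace ℝ (Fin n))).symm :
    (EuclideanSpace ℝ (Fin m) × EuclideanSpace ℝ (Fin n)) →L[ℝ] W).comp
    (ContinuousLinearMap.inr ℝ _ _)

lemma Lmap_apply (v : G) : (Lmap (m := m) v) = (WithLp.equiv 2 _).symm ((0 : E), v) := rfl

lemma Lmap_norm (v : G) : ‖Lmap (m := m) v‖ = ‖v‖ := by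
  have h : ‖Lmap (m := m) v‖ ^ 2 = ‖v‖ ^ 2 := by
    rw [WithLp.prod_norm_sq_eq_of_L2]; simp [Lmap_apply]
  nlinarith [norm_nonneg (Lmap (m := m) v), norm_nonneg v]

lemma gradYF_eq (F : W → ℝ) (hF : ContDiff ℝ 1 F) (z : E) (y : G) :
    gradYF F z y = ContinuousLinearMap.adjoint (Lmap (m := m) (n := n))
      (gradient F ((WithLp.equiv 2 _).symm (z, y))) := by
  set w : W := (WithLp.equiv 2 _).symm (z, y) with hw
  have hdF : HasFDerivAt F (fderiv ℝ F w) w :=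
    ((hF.differentiable one_ne_zero) w).hasFDerivAt
  have hι : HasFDerivAt (fun y' : G => ((WithLp.equiv 2 _).symm ((z : E), y') : W))
      (Lmap (m := m) (n := n)) y := by
    have heq : (fun y' : G => ((WithLp.equiv 2 _).symm ((z : E), y') : W))
        = fun y' : G => ((WithLp.equiv 2 _).symm ((z : E), 0) : W) + Lmap y' := by
      funext y'
      apply (WithLp.equiv 2 (_ × _)).injective
      ext i <;> simp [Lmap_apply]
    rw [heq]
    exact (Lmap.hasFDerivAt).const_add _
  have hcomp : HasFDerivAt (fun y' => F ((WithLp.equiv 2 _).symm (z, y')))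
      ((fderiv ℝ F w).comp (Lmap (m := m) (n := n))) y := hdF.comp y hι
  have hgrad : HasGradientAt (fun y' => F ((WithLp.equiv 2 _).symm (z, y')))
      (ContinuousLinearMap.adjoint (Lmap (m := m) (n := n)) (gradient F w)) y := by
    rw [hasGradientAt_iff_hasFDerivAt]
    refine hcomp.congr_fderiv ?_
    ext v : 1
    rw [InnerProductSpace.toDual_apply_apply, ContinuousLinearMap.adjoint_inner_left]
    have hfd : fderiv ℝ F w = InnerProductSpace.toDual ℝ W (gradient F w) :=
      ((InnerProductSpace.toDual ℝ W).apply_symm_apply (fderiv ℝ F w)).symm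
    rw [ContinuousLinearMap.comp_apply, hfd, InnerProductSpace.toDual_apply_apply]
  exact hgrad.gradient
end aux

theorem stmt3 {m n : ℕ} (zhat : EuclideanSpace ℝ (Fin m))
    (A : EuclideanSpace ℝ (Fin n) ≃L[ℝ] EuclideanSpace ℝ (Fin n))
    (b : EuclideanSpace ℝ (Fin n)) (τR τψ : ℝ) (hτR : 0 < τR) (hτψ : 0 < τψ)
    (F : WithLp 2 (EuclideanSpace ℝ (Fin m) × EuclideanSpace ℝ (Fin n)) → ℝ)
    (hF : ContDiff ℝ 1 F) (LF : ℝ)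
    (hLF : ∀ w₁ w₂, ‖gradient F w₁ - gradient F w₂‖ ≤ LF * ‖w₁ - w₂‖)
    -- the exact state and the exact adjoint associated with it
    (ystar : EuclideanSpace ℝ (Fin n)) (hystar : ystar = A.symm b)
    (ψstar : EuclideanSpace ℝ (Fin n))
    (hψstar : ContinuousLinearMap.adjoint
        (A : EuclideanSpace ℝ (Fin n) →L[ℝ] EuclideanSpace ℝ (Fin n)) ψstar
      = gradYF F zhat ystar) :
    ∀ y ∈ {y : EuclideanSpace ℝ (Fin n) | ‖A y - b‖ ≤ τR},
      ∀ ψ ∈ {ψ : EuclideanSpace ℝ (Fin n) |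
          ‖ContinuousLinearMap.adjoint
              (A : EuclideanSpace ℝ (Fin n) →L[ℝ] EuclideanSpace ℝ (Fin n)) ψ
            - gradYF F zhat y‖ ≤ τψ},
        ‖ψ - ψstar‖ ≤
          ‖(A.symm : EuclideanSpace ℝ (Fin n) →L[ℝ] EuclideanSpace ℝ (Fin n))‖ ^ 2 * LF * τR
          + ‖(A.symm : EuclideanSpace ℝ (Fin n) →L[ℝ] EuclideanSpace ℝ (Fin n))‖ * τψ := by
  intro y hy ψ hψ
  by_cases hn : n = 0
  · have h1 : ψ - ψstar = 0 := by
      have : Subsingleton (EuclideanSpace ℝ (Fin n)) := by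
        subst hn; infer_instance
      exact Subsingleton.elim _ _
    have h2 : (A.symm : (EuclideanSpace ℝ (Fin n)) →L[ℝ] (EuclideanSpace ℝ (Fin n))) = 0 := by
      have : Subsingleton (EuclideanSpace ℝ (Fin n)) := by
        subst hn; infer_instance
      exact Subsingleton.elim _ _
    rw [h1, h2]
    simp only [norm_zero]
    norm_num
  · have hnpos : 0 < n := Nat.pos_of_ne_zero hn
    set Ac : (EuclideanSpace ℝ (Fin n)) →L[ℝ] (EuclideanSpace ℝ (Fin n)) := (A : (EuclideanSpace ℝ (Fin n)) →L[ℝ] (EuclideanSpace ℝ (Fin n))) with hAc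
    set Sc : (EuclideanSpace ℝ (Fin n)) →L[ℝ] (EuclideanSpace ℝ (Fin n)) := (A.symm : (EuclideanSpace ℝ (Fin n)) →L[ℝ] (EuclideanSpace ℝ (Fin n))) with hSc
    set C : ℝ := ‖Sc‖ with hCdef
    have hC : 0 ≤ C := norm_nonneg _
    have hLF0 : 0 ≤ LF := by
      have hv : ‖(EuclideanSpace.single (⟨0, hnpos⟩ : Fin n) (1 : ℝ) : (EuclideanSpace ℝ (Fin n)))‖ = 1 := by
        simp
      have h := hLF (Lmap (m := m) (EuclideanSpace.single ⟨0, hnpos⟩ 1)) 0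
      rw [sub_zero, Lmap_norm, hv, mul_one] at h
      exact le_trans (norm_nonneg _) h
    have hyst : y - ystar = Sc (A y - b) := by
      rw [hystar, map_sub]
      simp [hSc]
    have hyb : ‖y - ystar‖ ≤ C * τR := by
      rw [hyst]
      calc ‖Sc (A y - b)‖ ≤ C * ‖A y - b‖ := Sc.le_opNorm _
        _ ≤ C * τR := mul_le_mul_of_nonneg_left hy hC
    have hgd : ‖gradYF F zhat y - gradYF F zhat ystar‖ ≤ LF * ‖y - ystar‖ := by
      rw [gradYF_eq F hF, gradYF_eq F hF, ← map_sub]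
      have hA1 : ‖ContinuousLinearMap.adjoint (Lmap (m := m) (n := n))‖ ≤ 1 := by
        rw [LinearIsometryEquiv.norm_map ContinuousLinearMap.adjoint]
        apply ContinuousLinearMap.opNorm_le_bound _ zero_le_one
        intro v; rw [Lmap_norm, one_mul]
      have hd2 : ‖gradient F ((WithLp.equiv 2 _).symm (zhat, y))
            - gradient F ((WithLp.equiv 2 _).symm (zhat, ystar))‖ ≤ LF * ‖y - ystar‖ := by
        have hwdiff : ((WithLp.equiv 2 _).symm (zhat, y) :
              WithLp 2 (EuclideanSpace ℝ (Fin m) × EuclideanSpace ℝ (Fin n)))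
            - (WithLp.equiv 2 _).symm (zhat, ystar) = Lmap (y - ystar) := by
          apply (WithLp.equiv 2 (_ × _)).injective
          ext i <;> simp [Lmap_apply]
        calc _ ≤ LF * ‖((WithLp.equiv 2 _).symm (zhat, y) :
                WithLp 2 (EuclideanSpace ℝ (Fin m) × EuclideanSpace ℝ (Fin n)))
                - (WithLp.equiv 2 _).symm (zhat, ystar)‖ := hLF _ _
          _ = LF * ‖y - ystar‖ := by rw [hwdiff, Lmap_norm]
      calc ‖ContinuousLinearMap.adjoint (Lmap (m := m) (n := n))
              (gradient F ((WithLp.equiv 2 _).symm (zhat, y))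
                - gradient F ((WithLp.equiv 2 _).symm (zhat, ystar)))‖
          ≤ ‖ContinuousLinearMap.adjoint (Lmap (m := m) (n := n))‖ *
              ‖gradient F ((WithLp.equiv 2 _).symm (zhat, y))
                - gradient F ((WithLp.equiv 2 _).symm (zhat, ystar))‖ :=
            ContinuousLinearMap.le_opNorm _ _
        _ ≤ 1 * (LF * ‖y - ystar‖) :=
            mul_le_mul hA1 hd2 (norm_nonneg _) zero_le_one
        _ = LF * ‖y - ystar‖ := one_mul _
    have hrec : ψ - ψstar = ContinuousLinearMap.adjoint Sc
        (ContinuousLinearMap.adjoint Ac ψ - ContinuousLinearMap.adjoint Ac ψstar) := by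
      have hid : Ac.comp Sc = ContinuousLinearMap.id ℝ (EuclideanSpace ℝ (Fin n)) :=
        A.coe_comp_coe_symm
      have key : ∀ x : (EuclideanSpace ℝ (Fin n)),
          ContinuousLinearMap.adjoint Sc (ContinuousLinearMap.adjoint Ac x) = x := by
        intro x
        have h1 : (ContinuousLinearMap.adjoint Sc).comp (ContinuousLinearMap.adjoint Ac)
            = ContinuousLinearMap.id ℝ (EuclideanSpace ℝ (Fin n)) := by
          rw [← ContinuousLinearMap.adjoint_comp, hid, ContinuousLinearMap.adjoint_id]
        calc ContinuousLinearMap.adjoint Sc (ContinuousLinearMap.adjoint Ac x)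
            = ((ContinuousLinearMap.adjoint Sc).comp (ContinuousLinearMap.adjoint Ac)) x := rfl
          _ = x := by rw [h1]; rfl
      rw [map_sub, key, key]
    have hdb : ‖ContinuousLinearMap.adjoint Ac ψ - ContinuousLinearMap.adjoint Ac ψstar‖
        ≤ τψ + LF * (C * τR) := by
      have : ContinuousLinearMap.adjoint Ac ψ - ContinuousLinearMap.adjoint Ac ψstar
          = (ContinuousLinearMap.adjoint Ac ψ - gradYF F zhat y)
            + (gradYF F zhat y - gradYF F zhat ystar) := by
        rw [hψstar]; abel
      rw [this]
      refine le_trans (norm_add_le _ _) (add_le_add hψ ?_)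
      exact le_trans hgd (mul_le_mul_of_nonneg_left hyb hLF0)
    have hnorms : ‖ContinuousLinearMap.adjoint Sc‖ = C := by
      rw [LinearIsometryEquiv.norm_map ContinuousLinearMap.adjoint]
    calc ‖ψ - ψstar‖
        = ‖ContinuousLinearMap.adjoint Sc
            (ContinuousLinearMap.adjoint Ac ψ - ContinuousLinearMap.adjoint Ac ψstar)‖ := by
          rw [← hrec]
      _ ≤ C * ‖ContinuousLinearMap.adjoint Ac ψ - ContinuousLinearMap.adjoint Ac ψstar‖ := by
          rw [← hnorms]; exact ContinuousLinearMap.le_opNorm _ _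
      _ ≤ C * (τψ + LF * (C * τR)) := mul_le_mul_of_nonneg_left hdb hC
      _ = C ^ 2 * LF * τR + C * τψ := by ring
end

section
/- Fix ẑ ∈ ℝ^m and tolerances τ_R > 0, τ_ψ > 0. Let A : ℝ^m → GL(n,ℝ) and b : ℝ^m → ℝ^n be C¹ with: (i) ‖∂A/∂z_k|_z‖₂ ≤ C_A for all z and k; (ii) ‖∂b/∂z|_z‖₂ ≤ C_b for all z; and let F : ℝ^m × ℝ^n → ℝ be C¹ and L_F-smooth. Define R(z,y) = A(z)y − b(z), ∂R/∂z|_(z,y) = (∂A/∂z|_z)y − ∂b/∂z|_z, the exact state y*_ẑ = A(ẑ)⁻¹b(ẑ), C_R(ẑ) = ‖A(ẑ)⁻¹‖₂, 𝒴_ẑ = { y : ‖A(ẑ)y − b(ẑ)‖₂ ≤ τ_R }, C_{𝒴_ẑ} = sup_{y∈𝒴_ẑ}‖y‖₂, M_F(ẑ) = sup_{y∈𝒴_ẑ}‖∇_y F(ẑ,y)‖₂, the exact adjoint ψ*_{ẑ,y*_ẑ} solving A(ẑ)ᵀψ = ∇_y F(ẑ,y*_ẑ), the admissible adjoint set 𝒜_{ẑ,y}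 = { ψ : ‖A(ẑ)ᵀψ − ∇_y F(ẑ,y)‖₂ ≤ τ_ψ }, the inexact adjoint gradient ∇̄F̃(ẑ) = ∇_z F(ẑ,y) − [∂R/∂z|_(ẑ,y)]ᵀψ for y ∈ 𝒴_ẑ and ψ ∈ 𝒜_{ẑ,y}, and the exact adjoint gradient ∇F̃(ẑ) = ∇_z F(ẑ,y*_ẑ) − [∂R/∂z|_(ẑ,y*_ẑ)]ᵀψ*_{ẑ,y*_ẑ}. Then for every y ∈ 𝒴_ẑ and every ψ ∈ 𝒜_{ẑ,y}, ‖∇̄F̃(ẑ) − ∇F̃(ẑ)‖₂ ≤ D_R(ẑ)·τ_R + D_ψ(ẑ)·τ_ψ, where D_R(ẑ) = L_F·C_R(ẑ) + L_F·(√m·C_A·C_{𝒴_ẑ} + C_b)·C_R(ẑ)² + √m·C_A·M_F(ẑ)·C_R(ẑ)² and D_ψ(ẑ) = (√m·C_A·C_{𝒴_ẑ} + C_b)·C_R(ẑ). -/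
open ContinuousLinearMap

/-- The partial Jacobian `∂R/∂z|_(z,y)` of the affine residual `R(z,y) = A(z) y - b(z)`. -/
noncomputable def partialJacZ {m n : ℕ}
    (A : EuclideanSpace ℝ (Fin m) → (EuclideanSpace ℝ (Fin n) →L[ℝ] EuclideanSpace ℝ (Fin n)))
    (b : EuclideanSpace ℝ (Fin m) → EuclideanSpace ℝ (Fin n))
    (z : EuclideanSpace ℝ (Fin m)) (y : EuclideanSpace ℝ (Fin n)) :
    EuclideanSpace ℝ (Fin m) →L[ℝ] EuclideanSpace ℝ (Fin n) :=
  (fderiv ℝ A z).flip y - fderiv ℝ b z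

/-- The partial gradient `∇_z F(z, y)` of `F : ℝ^m × ℝ^n → ℝ` (Euclidean product norm). -/
noncomputable def gradZF {m n : ℕ}
    (F : WithLp 2 (EuclideanSpace ℝ (Fin m) × EuclideanSpace ℝ (Fin n)) → ℝ)
    (z : EuclideanSpace ℝ (Fin m)) (y : EuclideanSpace ℝ (Fin n)) :
    EuclideanSpace ℝ (Fin m) :=
  gradient (fun z' => F ((WithLp.equiv 2 _).symm (z', y))) z

/-! ### Auxiliary lemmas -/

open InnerProductSpace

lemma aux_sum_abs_le {m : ℕ} (v : EuclideanSpace ℝ (Fin m)) :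
    ∑ k, |v k| ≤ Real.sqrt m * ‖v‖ := by
  set u : EuclideanSpace ℝ (Fin m) := WithLp.toLp 2 (fun k => |v k|) with hu
  set o : EuclideanSpace ℝ (Fin m) := WithLp.toLp 2 (fun _ => 1) with ho
  have h1 : ⟪u, o⟫_ℝ = ∑ k, |v k| := by
    simp [PiLp.inner_apply, hu, ho, RCLike.inner_apply]
  have h2 : ‖u‖ = ‖v‖ := by
    rw [EuclideanSpace.norm_eq, EuclideanSpace.norm_eq]
    congr 1
    refine Finset.sum_congr rfl fun k _ => ?_
    simp [hu, sq_abs]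
  have h3 : ‖o‖ = Real.sqrt m := by
    rw [EuclideanSpace.norm_eq]
    simp [ho]
  calc ∑ k, |v k| = ⟪u, o⟫_ℝ := h1.symm
    _ ≤ ‖u‖ * ‖o‖ := real_inner_le_norm u o
    _ = Real.sqrt m * ‖v‖ := by rw [h2, h3]; ring

lemma aux_opNorm_le {m : ℕ} {E : Type*} [NormedAddCommGroup E] [NormedSpace ℝ E]
    (M : EuclideanSpace ℝ (Fin m) →L[ℝ] E) {C : ℝ} (hC : 0 ≤ C)
    (h : ∀ k, ‖M (EuclideanSpace.single k (1:ℝ))‖ ≤ C) :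
    ‖M‖ ≤ Real.sqrt m * C := by
  refine ContinuousLinearMap.opNorm_le_bound _ (by positivity) (fun v => ?_)
  have hv : v = ∑ k, v k • EuclideanSpace.single k (1:ℝ) := by
    ext i
    have : (∑ k : Fin m, v k • EuclideanSpace.single k (1:ℝ)) i
        = ∑ k : Fin m, (v k • EuclideanSpace.single k (1:ℝ)) i := by
          rw [WithLp.ofLp_sum]; exact Finset.sum_apply i Finset.univ _
    rw [this]
    simp [EuclideanSpace.single_apply, Finset.sum_ite_eq]
  have hMv : M v = ∑ k, v k • M (EuclideanSpace.single k (1:ℝ)) := by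
    conv_lhs => rw [hv]
    simp
  rw [hMv]
  calc ‖∑ k, v k • M (EuclideanSpace.single k (1:ℝ))‖
      ≤ ∑ k, ‖v k • M (EuclideanSpace.single k (1:ℝ))‖ := norm_sum_le _ _
    _ = ∑ k, |v k| * ‖M (EuclideanSpace.single k (1:ℝ))‖ := by
        simp [norm_smul]
    _ ≤ ∑ k, |v k| * C :=
        Finset.sum_le_sum fun k _ => mul_le_mul_of_nonneg_left (h k) (abs_nonneg _)
    _ = (∑ k, |v k|) * C := by rw [Finset.sum_mul]
    _ ≤ (Real.sqrt m * ‖v‖) * C := mul_le_mul_of_nonneg_right (aux_sum_abs_le v) hC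
    _ = Real.sqrt m * C * ‖v‖ := by ring

lemma aux_norm_sq {E F : Type*} [NormedAddCommGroup E] [InnerProductSpace ℝ E]
    [NormedAddCommGroup F] [InnerProductSpace ℝ F] (u : WithLp 2 (E × F)) :
    ‖u‖ ^ 2 = ‖u.fst‖ ^ 2 + ‖u.snd‖ ^ 2 := by
  have h := WithLp.prod_inner_apply (𝕜 := ℝ) u u
  rw [real_inner_self_eq_norm_sq, real_inner_self_eq_norm_sq, real_inner_self_eq_norm_sq] at h
  exact h

lemma aux_fst_le {E F : Type*} [NormedAddCommGroup E] [InnerProductSpace ℝ E]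
    [NormedAddCommGroup F] [InnerProductSpace ℝ F] (u : WithLp 2 (E × F)) :
    ‖u.fst‖ ≤ ‖u‖ := by
  nlinarith [aux_norm_sq u, norm_nonneg u, norm_nonneg u.fst, norm_nonneg u.snd]

lemma aux_snd_le {E F : Type*} [NormedAddCommGroup E] [InnerProductSpace ℝ E]
    [NormedAddCommGroup F] [InnerProductSpace ℝ F] (u : WithLp 2 (E × F)) :
    ‖u.snd‖ ≤ ‖u‖ := by
  nlinarith [aux_norm_sq u, norm_nonneg u, norm_nonneg u.fst, norm_nonneg u.snd]

noncomputable def embZ (m n : ℕ) : EuclideanSpace ℝ (Fin m) →L[ℝ]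
    WithLp 2 (EuclideanSpace ℝ (Fin m) × EuclideanSpace ℝ (Fin n)) :=
  ((WithLp.prodContinuousLinearEquiv 2 ℝ (EuclideanSpace ℝ (Fin m))
    (EuclideanSpace ℝ (Fin n))).symm.toContinuousLinearMap).comp
    (ContinuousLinearMap.inl ℝ _ _)

noncomputable def embY (m n : ℕ) : EuclideanSpace ℝ (Fin n) →L[ℝ]
    WithLp 2 (EuclideanSpace ℝ (Fin m) × EuclideanSpace ℝ (Fin n)) :=
  ((WithLp.prodContinuousLinearEquiv 2 ℝ (EuclideanSpace ℝ (Fin m))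
    (EuclideanSpace ℝ (Fin n))).symm.toContinuousLinearMap).comp
    (ContinuousLinearMap.inr ℝ _ _)

lemma embZ_apply {m n : ℕ} (v : EuclideanSpace ℝ (Fin m)) :
    embZ m n v = (WithLp.equiv 2 _).symm (v, 0) := rfl

lemma embY_apply {m n : ℕ} (v : EuclideanSpace ℝ (Fin n)) :
    embY m n v = (WithLp.equiv 2 _).symm (0, v) := rfl

lemma gradYF_snd {m n : ℕ}
    {F : WithLp 2 (EuclideanSpace ℝ (Fin m) × EuclideanSpace ℝ (Fin n)) → ℝ}
    (hF : Differentiable ℝ F) (z : EuclideanSpace ℝ (Fin m)) (y : EuclideanSpace ℝ (Fin n)) :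
    gradYF F z y = (gradient F ((WithLp.equiv 2 _).symm (z, y))).snd := by
  set w := (WithLp.equiv 2 _).symm ((z, y) :
    EuclideanSpace ℝ (Fin m) × EuclideanSpace ℝ (Fin n)) with hw
  have hT : (fun y' => (WithLp.equiv 2 (EuclideanSpace ℝ (Fin m) × EuclideanSpace ℝ (Fin n))).symm
      ((z, y') : EuclideanSpace ℝ (Fin m) × EuclideanSpace ℝ (Fin n))) =
      fun y' => embY m n y' + (WithLp.equiv 2 _).symm
        ((z, 0) : EuclideanSpace ℝ (Fin m) × EuclideanSpace ℝ (Fin n)) := by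
    funext y'
    rw [embY_apply, WithLp.equiv_symm_apply, ← WithLp.toLp_add]
    simp
  have hg : HasFDerivAt (fun y' => (WithLp.equiv 2
      (EuclideanSpace ℝ (Fin m) × EuclideanSpace ℝ (Fin n))).symm
      ((z, y') : EuclideanSpace ℝ (Fin m) × EuclideanSpace ℝ (Fin n))) (embY m n) y := by
    rw [hT]
    exact (embY m n).hasFDerivAt.add_const _
  have hder : HasFDerivAt (fun y' => F ((WithLp.equiv 2 _).symm (z, y')))
      ((fderiv ℝ F w).comp (embY m n)) y := by
    exact (hF w).hasFDerivAt.comp y hg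
  apply ext_inner_right ℝ
  intro v
  have h1 : ⟪gradYF F z y, v⟫_ℝ
      = fderiv ℝ (fun y' => F ((WithLp.equiv 2 _).symm (z, y'))) y v := by
    rw [gradYF, gradient, InnerProductSpace.toDual_symm_apply]
  rw [h1, hder.fderiv, ContinuousLinearMap.comp_apply]
  have h2 : fderiv ℝ F w (embY m n v) = ⟪gradient F w, embY m n v⟫_ℝ := by
    rw [gradient, InnerProductSpace.toDual_symm_apply]
  rw [h2, WithLp.prod_inner_apply, embY_apply]
  simp

lemma gradZF_fst {m n : ℕ}
    {F : WithLp 2 (EuclideanSpace ℝ (Fin m) × EuclideanSpace ℝ (Fin n)) → ℝ}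
    (hF : Differentiable ℝ F) (z : EuclideanSpace ℝ (Fin m)) (y : EuclideanSpace ℝ (Fin n)) :
    gradZF F z y = (gradient F ((WithLp.equiv 2 _).symm (z, y))).fst := by
  set w := (WithLp.equiv 2 _).symm ((z, y) :
    EuclideanSpace ℝ (Fin m) × EuclideanSpace ℝ (Fin n)) with hw
  have hT : (fun z' => (WithLp.equiv 2 (EuclideanSpace ℝ (Fin m) × EuclideanSpace ℝ (Fin n))).symm
      ((z', y) : EuclideanSpace ℝ (Fin m) × EuclideanSpace ℝ (Fin n))) =
      fun z' => embZ m n z' + (WithLp.equiv 2 _).symm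
        ((0, y) : EuclideanSpace ℝ (Fin m) × EuclideanSpace ℝ (Fin n)) := by
    funext z'
    rw [embZ_apply, WithLp.equiv_symm_apply, ← WithLp.toLp_add]
    simp
  have hg : HasFDerivAt (fun z' => (WithLp.equiv 2
      (EuclideanSpace ℝ (Fin m) × EuclideanSpace ℝ (Fin n))).symm
      ((z', y) : EuclideanSpace ℝ (Fin m) × EuclideanSpace ℝ (Fin n))) (embZ m n) z := by
    rw [hT]
    exact (embZ m n).hasFDerivAt.add_const _
  have hder : HasFDerivAt (fun z' => F ((WithLp.equiv 2 _).symm (z', y)))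
      ((fderiv ℝ F w).comp (embZ m n)) z := by
    exact (hF w).hasFDerivAt.comp z hg
  apply ext_inner_right ℝ
  intro v
  have h1 : ⟪gradZF F z y, v⟫_ℝ
      = fderiv ℝ (fun z' => F ((WithLp.equiv 2 _).symm (z', y))) z v := by
    rw [gradZF, gradient, InnerProductSpace.toDual_symm_apply]
  rw [h1, hder.fderiv, ContinuousLinearMap.comp_apply]
  have h2 : fderiv ℝ F w (embZ m n v) = ⟪gradient F w, embZ m n v⟫_ℝ := by
    rw [gradient, InnerProductSpace.toDual_symm_apply]
  rw [h2, WithLp.prod_inner_apply, embZ_apply]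
  simp

lemma aux_norm_sub_eq {m n : ℕ} (z : EuclideanSpace ℝ (Fin m))
    (y₁ y₂ : EuclideanSpace ℝ (Fin n)) :
    ‖((WithLp.equiv 2 (EuclideanSpace ℝ (Fin m) × EuclideanSpace ℝ (Fin n))).symm (z, y₁))
      - ((WithLp.equiv 2 _).symm (z, y₂))‖ = ‖y₁ - y₂‖ := by
  have h4 : ((WithLp.equiv 2 (EuclideanSpace ℝ (Fin m) × EuclideanSpace ℝ (Fin n))).symm (z, y₁))
      - ((WithLp.equiv 2 _).symm (z, y₂)) = (WithLp.equiv 2 _).symm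
      ((0 : EuclideanSpace ℝ (Fin m)), y₁ - y₂) := by
    rw [WithLp.equiv_symm_apply, ← WithLp.toLp_sub, Prod.mk_sub_mk, sub_self]
  rw [h4, WithLp.equiv_symm_apply, WithLp.norm_toLp_snd]

lemma gradYF_lip {m n : ℕ}
    {F : WithLp 2 (EuclideanSpace ℝ (Fin m) × EuclideanSpace ℝ (Fin n)) → ℝ}
    (hF : Differentiable ℝ F) {LF : ℝ}
    (hLF : ∀ w₁ w₂, ‖gradient F w₁ - gradient F w₂‖ ≤ LF * ‖w₁ - w₂‖)
    (z : EuclideanSpace ℝ (Fin m)) (y₁ y₂ : EuclideanSpace ℝ (Fin n)) :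
    ‖gradYF F z y₁ - gradYF F z y₂‖ ≤ LF * ‖y₁ - y₂‖ := by
  rw [gradYF_snd hF, gradYF_snd hF]
  set w₁ := (WithLp.equiv 2 _).symm ((z, y₁) :
    EuclideanSpace ℝ (Fin m) × EuclideanSpace ℝ (Fin n)) with hw₁
  set w₂ := (WithLp.equiv 2 _).symm ((z, y₂) :
    EuclideanSpace ℝ (Fin m) × EuclideanSpace ℝ (Fin n)) with hw₂
  have h1 : (gradient F w₁).snd - (gradient F w₂).snd
      = (gradient F w₁ - gradient F w₂).snd := rfl
  rw [h1]
  calc ‖(gradient F w₁ - gradient F w₂).snd‖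
      ≤ ‖gradient F w₁ - gradient F w₂‖ := aux_snd_le _
    _ ≤ LF * ‖w₁ - w₂‖ := hLF w₁ w₂
    _ = LF * ‖y₁ - y₂‖ := by rw [hw₁, hw₂, aux_norm_sub_eq]

lemma gradZF_lip {m n : ℕ}
    {F : WithLp 2 (EuclideanSpace ℝ (Fin m) × EuclideanSpace ℝ (Fin n)) → ℝ}
    (hF : Differentiable ℝ F) {LF : ℝ}
    (hLF : ∀ w₁ w₂, ‖gradient F w₁ - gradient F w₂‖ ≤ LF * ‖w₁ - w₂‖)
    (z : EuclideanSpace ℝ (Fin m)) (y₁ y₂ : EuclideanSpace ℝ (Fin n)) :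
    ‖gradZF F z y₁ - gradZF F z y₂‖ ≤ LF * ‖y₁ - y₂‖ := by
  rw [gradZF_fst hF, gradZF_fst hF]
  set w₁ := (WithLp.equiv 2 _).symm ((z, y₁) :
    EuclideanSpace ℝ (Fin m) × EuclideanSpace ℝ (Fin n)) with hw₁
  set w₂ := (WithLp.equiv 2 _).symm ((z, y₂) :
    EuclideanSpace ℝ (Fin m) × EuclideanSpace ℝ (Fin n)) with hw₂
  have h1 : (gradient F w₁).fst - (gradient F w₂).fst
      = (gradient F w₁ - gradient F w₂).fst := rfl
  rw [h1]
  calc ‖(gradient F w₁ - gradient F w₂).fst‖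
      ≤ ‖gradient F w₁ - gradient F w₂‖ := aux_fst_le _
    _ ≤ LF * ‖w₁ - w₂‖ := hLF w₁ w₂
    _ = LF * ‖y₁ - y₂‖ := by rw [hw₁, hw₂, aux_norm_sub_eq]

set_option maxHeartbeats 2000000 in
theorem stmt4 {m n : ℕ}
    (zhat : EuclideanSpace ℝ (Fin m)) (τR τψ : ℝ) (hτR : 0 < τR) (hτψ : 0 < τψ)
    (A Ainv : EuclideanSpace ℝ (Fin m) →
      (EuclideanSpace ℝ (Fin n) →L[ℝ] EuclideanSpace ℝ (Fin n)))
    (b : EuclideanSpace ℝ (Fin m) → EuclideanSpace ℝ (Fin n))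
    (hA : ContDiff ℝ 1 A) (hb : ContDiff ℝ 1 b)
    (hAinv : ∀ z, (A z).comp (Ainv z) = ContinuousLinearMap.id ℝ (EuclideanSpace ℝ (Fin n)) ∧
      (Ainv z).comp (A z) = ContinuousLinearMap.id ℝ (EuclideanSpace ℝ (Fin n)))
    (CA Cb : ℝ) (hCA : 0 < CA) (hCb : 0 < Cb)
    (hAbound : ∀ z (k : Fin m), ‖fderiv ℝ A z (EuclideanSpace.single k (1 : ℝ))‖ ≤ CA)
    (hbbound : ∀ z, ‖fderiv ℝ b z‖ ≤ Cb)
    (F : WithLp 2 (EuclideanSpace ℝ (Fin m) × EuclideanSpace ℝ (Fin n)) → ℝ)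
    (hF : ContDiff ℝ 1 F) (LF : ℝ)
    (hLF : ∀ w₁ w₂, ‖gradient F w₁ - gradient F w₂‖ ≤ LF * ‖w₁ - w₂‖)
    -- the admissible state set, the exact state, and the exact adjoint
    (Yset : Set (EuclideanSpace ℝ (Fin n)))
    (hYset : Yset = {y | ‖A zhat y - b zhat‖ ≤ τR})
    (ystar : EuclideanSpace ℝ (Fin n)) (hystar : ystar = Ainv zhat (b zhat))
    (ψstar : EuclideanSpace ℝ (Fin n))
    (hψstar : ContinuousLinearMap.adjoint (A zhat) ψstar = gradYF F zhat ystar)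
    -- the constants C_R(ẑ), C_{𝒴_ẑ}, M_F(ẑ), D_R(ẑ), D_ψ(ẑ)
    (CR CY MF DR Dψ : ℝ)
    (hCR : CR = ‖Ainv zhat‖) (hCY : CY = sSup (norm '' Yset))
    (hMF : MF = sSup ((fun y => ‖gradYF F zhat y‖) '' Yset))
    (hDR : DR = LF * CR + LF * (Real.sqrt m * CA * CY + Cb) * CR ^ 2
      + Real.sqrt m * CA * MF * CR ^ 2)
    (hDψ : Dψ = (Real.sqrt m * CA * CY + Cb) * CR) :
    ∀ y ∈ Yset,
      ∀ ψ ∈ {ψ : EuclideanSpace ℝ (Fin n) |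
          ‖ContinuousLinearMap.adjoint (A zhat) ψ - gradYF F zhat y‖ ≤ τψ},
        ‖(gradZF F zhat y - ContinuousLinearMap.adjoint (partialJacZ A b zhat y) ψ)
          - (gradZF F zhat ystar
              - ContinuousLinearMap.adjoint (partialJacZ A b zhat ystar) ψstar)‖
          ≤ DR * τR + Dψ * τψ := by
  have hFd : Differentiable ℝ F := hF.differentiable one_ne_zero
  intro y hy ψ hψ
  by_cases h0 : m = 0 ∧ n = 0
  · obtain ⟨hm0, hn0⟩ := h0
    subst hm0; subst hn0
    haveI hsm : Subsingleton (EuclideanSpace ℝ (Fin 0)) :=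
      ⟨fun a c => PiLp.ext fun i => Fin.elim0 i⟩
    have hA0 : Ainv zhat = 0 := Subsingleton.elim _ _
    have hCR0 : CR = 0 := by rw [hCR, hA0, norm_zero]
    rw [Subsingleton.elim ((gradZF F zhat y - ContinuousLinearMap.adjoint (partialJacZ A b zhat y) ψ)
          - (gradZF F zhat ystar
              - ContinuousLinearMap.adjoint (partialJacZ A b zhat ystar) ψstar))
          (0 : EuclideanSpace ℝ (Fin 0)), norm_zero, hDR, hDψ, hCR0]
    norm_num
  · push_neg at h0
    have hLF0 : 0 ≤ LF := by
      have hW : ∃ w : WithLp 2 (EuclideanSpace ℝ (Fin m) × EuclideanSpace ℝ (Fin n)),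
          ‖w‖ = 1 := by
        rcases Nat.eq_zero_or_pos m with hm | hm
        · refine ⟨(WithLp.equiv 2 _).symm
            (0, EuclideanSpace.single ⟨0, Nat.pos_of_ne_zero (h0 hm)⟩ 1), ?_⟩
          rw [WithLp.equiv_symm_apply, WithLp.norm_toLp_snd, EuclideanSpace.norm_single]
          norm_num
        · refine ⟨(WithLp.equiv 2 _).symm (EuclideanSpace.single ⟨0, hm⟩ 1, 0), ?_⟩
          rw [WithLp.equiv_symm_apply, WithLp.norm_toLp_fst, EuclideanSpace.norm_single]
          norm_num
      obtain ⟨w, hw⟩ := hW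
      have h := hLF w 0
      rw [sub_zero, hw, mul_one] at h
      exact le_trans (norm_nonneg _) h
    have hCR0 : 0 ≤ CR := hCR ▸ norm_nonneg _
    have hid1 : ∀ x, A zhat (Ainv zhat x) = x := by
      intro x
      have := DFunLike.congr_fun (hAinv zhat).1 x
      simpa using this
    have hid2 : ∀ x, Ainv zhat (A zhat x) = x := by
      intro x
      have := DFunLike.congr_fun (hAinv zhat).2 x
      simpa using this
    have hAystar : A zhat ystar = b zhat := by rw [hystar, hid1]
    have hystar_mem : ystar ∈ Yset := by
      rw [hYset]
      simp [Set.mem_setOf_eq, hAystar, hτR.le]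
    have hyres : ‖A zhat y - b zhat‖ ≤ τR := by rw [hYset] at hy; exact hy
    have hYnorm : ∀ y' ∈ Yset, ‖y'‖ ≤ CR * (τR + ‖b zhat‖) := by
      intro y' hy'
      rw [hYset] at hy'
      calc ‖y'‖ = ‖Ainv zhat (A zhat y')‖ := by rw [hid2]
        _ ≤ ‖Ainv zhat‖ * ‖A zhat y'‖ := le_opNorm _ _
        _ ≤ CR * (τR + ‖b zhat‖) := by
            rw [hCR]
            refine mul_le_mul_of_nonneg_left ?_ (norm_nonneg _)
            calc ‖A zhat y'‖ = ‖(A zhat y' - b zhat) + b zhat‖ := by rw [sub_add_cancel]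
              _ ≤ ‖A zhat y' - b zhat‖ + ‖b zhat‖ := norm_add_le _ _
              _ ≤ τR + ‖b zhat‖ := add_le_add_left hy' _
    have hYbdd : BddAbove (norm '' Yset) := by
      refine ⟨CR * (τR + ‖b zhat‖), ?_⟩
      rintro r ⟨y', hy', rfl⟩
      exact hYnorm y' hy'
    have hyCY : ∀ y' ∈ Yset, ‖y'‖ ≤ CY := fun y' h =>
      hCY ▸ le_csSup hYbdd ⟨y', h, rfl⟩
    have hCY0 : 0 ≤ CY := le_trans (norm_nonneg ystar) (hyCY ystar hystar_mem)
    have hgY : ∀ y₁ y₂, ‖gradYF F zhat y₁ - gradYF F zhat y₂‖ ≤ LF * ‖y₁ - y₂‖ :=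
      fun y₁ y₂ => gradYF_lip hFd hLF zhat y₁ y₂
    have hgZ : ∀ y₁ y₂, ‖gradZF F zhat y₁ - gradZF F zhat y₂‖ ≤ LF * ‖y₁ - y₂‖ :=
      fun y₁ y₂ => gradZF_lip hFd hLF zhat y₁ y₂
    have hMbdd : BddAbove ((fun y' => ‖gradYF F zhat y'‖) '' Yset) := by
      refine ⟨LF * (CY + CY) + ‖gradYF F zhat ystar‖, ?_⟩
      rintro r ⟨y', hy', rfl⟩
      calc ‖gradYF F zhat y'‖
          = ‖(gradYF F zhat y' - gradYF F zhat ystar) + gradYF F zhat ystar‖ := by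
            rw [sub_add_cancel]
        _ ≤ ‖gradYF F zhat y' - gradYF F zhat ystar‖ + ‖gradYF F zhat ystar‖ :=
            norm_add_le _ _
        _ ≤ LF * (CY + CY) + ‖gradYF F zhat ystar‖ := by
            refine add_le_add_left ?_ _
            refine le_trans (hgY y' ystar) (mul_le_mul_of_nonneg_left ?_ hLF0)
            refine le_trans (norm_sub_le _ _) ?_
            exact add_le_add (hyCY y' hy') (hyCY ystar hystar_mem)
    have hMF1 : ∀ y' ∈ Yset, ‖gradYF F zhat y'‖ ≤ MF := fun y' h =>
      hMF ▸ le_csSup hMbdd ⟨y', h, rfl⟩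
    have hMF0 : 0 ≤ MF := le_trans (norm_nonneg _) (hMF1 ystar hystar_mem)
    have hAe : A zhat (y - ystar) = A zhat y - b zhat := by rw [map_sub, hAystar]
    have he : ‖y - ystar‖ ≤ CR * τR := by
      calc ‖y - ystar‖ = ‖Ainv zhat (A zhat (y - ystar))‖ := by rw [hid2]
        _ ≤ ‖Ainv zhat‖ * ‖A zhat (y - ystar)‖ := le_opNorm _ _
        _ ≤ CR * τR := by
            rw [hCR, hAe]
            exact mul_le_mul_of_nonneg_left hyres (norm_nonneg _)
    have hadjid : ∀ x, ContinuousLinearMap.adjoint (Ainv zhat)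
        (ContinuousLinearMap.adjoint (A zhat) x) = x := by
      intro x
      have hcomp : (ContinuousLinearMap.adjoint (Ainv zhat)).comp
          (ContinuousLinearMap.adjoint (A zhat))
          = ContinuousLinearMap.id ℝ (EuclideanSpace ℝ (Fin n)) := by
        rw [← ContinuousLinearMap.adjoint_comp, (hAinv zhat).1, ContinuousLinearMap.adjoint_id]
      have := DFunLike.congr_fun hcomp x
      simpa using this
    have hadjnorm : ‖ContinuousLinearMap.adjoint (Ainv zhat)‖ = CR := by
      rw [hCR]
      exact ContinuousLinearMap.adjoint.norm_map (Ainv zhat)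
    have hψd : ‖ψ - ψstar‖ ≤ CR * (τψ + LF * (CR * τR)) := by
      have h1 : ContinuousLinearMap.adjoint (A zhat) (ψ - ψstar)
          = (ContinuousLinearMap.adjoint (A zhat) ψ - gradYF F zhat y)
            + (gradYF F zhat y - gradYF F zhat ystar) := by
        rw [map_sub, hψstar]; abel
      have h2 : ‖ContinuousLinearMap.adjoint (A zhat) (ψ - ψstar)‖
          ≤ τψ + LF * (CR * τR) := by
        rw [h1]
        refine le_trans (norm_add_le _ _) (add_le_add hψ ?_)
        exact le_trans (hgY y ystar) (mul_le_mul_of_nonneg_left he hLF0)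
      calc ‖ψ - ψstar‖ = ‖ContinuousLinearMap.adjoint (Ainv zhat)
            (ContinuousLinearMap.adjoint (A zhat) (ψ - ψstar))‖ := by rw [hadjid]
        _ ≤ ‖ContinuousLinearMap.adjoint (Ainv zhat)‖
            * ‖ContinuousLinearMap.adjoint (A zhat) (ψ - ψstar)‖ := le_opNorm _ _
        _ ≤ CR * (τψ + LF * (CR * τR)) := by
            rw [hadjnorm]
            exact mul_le_mul_of_nonneg_left h2 hCR0
    have hψs : ‖ψstar‖ ≤ CR * MF := by
      calc ‖ψstar‖ = ‖ContinuousLinearMap.adjoint (Ainv zhat)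
            (ContinuousLinearMap.adjoint (A zhat) ψstar)‖ := by rw [hadjid]
        _ ≤ ‖ContinuousLinearMap.adjoint (Ainv zhat)‖
            * ‖ContinuousLinearMap.adjoint (A zhat) ψstar‖ := le_opNorm _ _
        _ ≤ CR * MF := by
            rw [hadjnorm, hψstar]
            exact mul_le_mul_of_nonneg_left (hMF1 ystar hystar_mem) hCR0
    have hflip : ∀ u : EuclideanSpace ℝ (Fin n),
        ‖(fderiv ℝ A zhat).flip u‖ ≤ Real.sqrt m * (CA * ‖u‖) := by
      intro u
      refine aux_opNorm_le _ (by positivity) (fun k => ?_)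
      calc ‖(fderiv ℝ A zhat).flip u (EuclideanSpace.single k (1:ℝ))‖
          = ‖fderiv ℝ A zhat (EuclideanSpace.single k (1:ℝ)) u‖ := rfl
        _ ≤ ‖fderiv ℝ A zhat (EuclideanSpace.single k (1:ℝ))‖ * ‖u‖ := le_opNorm _ _
        _ ≤ CA * ‖u‖ := mul_le_mul_of_nonneg_right (hAbound zhat k) (norm_nonneg _)
    have hK0 : (0:ℝ) ≤ Real.sqrt m * CA * CY + Cb :=
      add_nonneg (mul_nonneg (mul_nonneg (Real.sqrt_nonneg _) hCA.le) hCY0) hCb.le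
    have hJ1 : ‖partialJacZ A b zhat y‖ ≤ Real.sqrt m * CA * CY + Cb := by
      unfold partialJacZ
      refine le_trans (norm_sub_le _ _) (add_le_add ?_ (hbbound zhat))
      refine le_trans (hflip y) ?_
      calc Real.sqrt m * (CA * ‖y‖) = (Real.sqrt m * CA) * ‖y‖ := by ring
        _ ≤ (Real.sqrt m * CA) * CY := mul_le_mul_of_nonneg_left (hyCY y hy)
            (mul_nonneg (Real.sqrt_nonneg _) hCA.le)
        _ = Real.sqrt m * CA * CY := rfl
    have hJdiff : partialJacZ A b zhat y - partialJacZ A b zhat ystar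
        = (fderiv ℝ A zhat).flip (y - ystar) := by
      unfold partialJacZ
      rw [map_sub]
      abel
    have hsplit : (gradZF F zhat y - ContinuousLinearMap.adjoint (partialJacZ A b zhat y) ψ)
        - (gradZF F zhat ystar - ContinuousLinearMap.adjoint (partialJacZ A b zhat ystar) ψstar)
        = (gradZF F zhat y - gradZF F zhat ystar)
          - ContinuousLinearMap.adjoint (partialJacZ A b zhat y) (ψ - ψstar)
          - ContinuousLinearMap.adjoint ((fderiv ℝ A zhat).flip (y - ystar)) ψstar := by
      have e1 : ContinuousLinearMap.adjoint
          (partialJacZ A b zhat y - partialJacZ A b zhat ystar)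
          = ContinuousLinearMap.adjoint (partialJacZ A b zhat y)
            - ContinuousLinearMap.adjoint (partialJacZ A b zhat ystar) :=
        map_sub ContinuousLinearMap.adjoint _ _
      rw [← hJdiff, e1, ContinuousLinearMap.sub_apply, map_sub]
      abel
    rw [hsplit]
    calc ‖(gradZF F zhat y - gradZF F zhat ystar)
        - ContinuousLinearMap.adjoint (partialJacZ A b zhat y) (ψ - ψstar)
        - ContinuousLinearMap.adjoint ((fderiv ℝ A zhat).flip (y - ystar)) ψstar‖
        ≤ ‖(gradZF F zhat y - gradZF F zhat ystar)
            - ContinuousLinearMap.adjoint (partialJacZ A b zhat y) (ψ - ψstar)‖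
          + ‖ContinuousLinearMap.adjoint ((fderiv ℝ A zhat).flip (y - ystar)) ψstar‖ :=
          norm_sub_le _ _
      _ ≤ ‖gradZF F zhat y - gradZF F zhat ystar‖
          + ‖ContinuousLinearMap.adjoint (partialJacZ A b zhat y) (ψ - ψstar)‖
          + ‖ContinuousLinearMap.adjoint ((fderiv ℝ A zhat).flip (y - ystar)) ψstar‖ :=
          add_le_add_left (norm_sub_le _ _) _
      _ ≤ LF * (CR * τR)
          + (Real.sqrt m * CA * CY + Cb) * (CR * (τψ + LF * (CR * τR)))
          + (Real.sqrt m * (CA * (CR * τR))) * (CR * MF) := by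
          refine add_le_add (add_le_add ?_ ?_) ?_
          · exact le_trans (hgZ y ystar) (mul_le_mul_of_nonneg_left he hLF0)
          · calc ‖ContinuousLinearMap.adjoint (partialJacZ A b zhat y) (ψ - ψstar)‖
                ≤ ‖ContinuousLinearMap.adjoint (partialJacZ A b zhat y)‖ * ‖ψ - ψstar‖ :=
                  le_opNorm _ _
              _ = ‖partialJacZ A b zhat y‖ * ‖ψ - ψstar‖ := by
                  rw [ContinuousLinearMap.adjoint.norm_map]
              _ ≤ (Real.sqrt m * CA * CY + Cb) * (CR * (τψ + LF * (CR * τR))) :=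
                  mul_le_mul hJ1 hψd (norm_nonneg _) hK0
          · calc ‖ContinuousLinearMap.adjoint ((fderiv ℝ A zhat).flip (y - ystar)) ψstar‖
                ≤ ‖ContinuousLinearMap.adjoint ((fderiv ℝ A zhat).flip (y - ystar))‖
                  * ‖ψstar‖ := le_opNorm _ _
              _ = ‖(fderiv ℝ A zhat).flip (y - ystar)‖ * ‖ψstar‖ := by
                  rw [ContinuousLinearMap.adjoint.norm_map]
              _ ≤ (Real.sqrt m * (CA * (CR * τR))) * (CR * MF) := by
                  refine mul_le_mul ?_ hψs (norm_nonneg _) ?_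
                  · refine le_trans (hflip _) ?_
                    exact mul_le_mul_of_nonneg_left
                      (mul_le_mul_of_nonneg_left he hCA.le) (Real.sqrt_nonneg _)
                  · exact mul_nonneg (Real.sqrt_nonneg _)
                      (mul_nonneg hCA.le (mul_nonneg hCR0 hτR.le))
      _ = DR * τR + Dψ * τψ := by rw [hDR, hDψ]; ring
end

section
/- Let F̃ : ℝ^m → ℝ be differentiable, and let sequences (z_k), (s_k), (∇̄F̃(z_k)) in ℝ^m satisfy, for constants c₁', c₂' > 0 and all k: (i) c₁'‖∇̄F̃(z_k)‖₂² ≤ −⟨∇̄F̃(z_k), s_k⟩; (ii) ‖s_k‖₂ ≤ c₂'‖∇̄F̃(z_k)‖₂; and (iii) ‖∇̄F̃(z_k) − ∇F̃(z_k)‖₂ ≤ ζ‖∇̄F̃(z_k)‖₂ with ζ ∈ [0, c₁'/c₂'). Then for all k, c₁‖∇F̃(z_k)‖₂² ≤ −⟨∇F̃(z_k), s_k⟩ and ‖s_k‖₂ ≤ c₂‖∇F̃(z_k)‖₂, where c₁ = (c₁' − ζc₂')/(1+ζ)² and c₂ = c₂'/(1−ζ). -/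
open scoped RealInnerProductSpace

theorem stmt9 {m : ℕ} (F : EuclideanSpace ℝ (Fin m) → ℝ) (hF : Differentiable ℝ F)
    (z s gbar : ℕ → EuclideanSpace ℝ (Fin m))
    (c₁' c₂' ζ : ℝ) (hc₁' : 0 < c₁') (hc₂' : 0 < c₂')
    (hζ : 0 ≤ ζ) (hζlt : ζ < c₁' / c₂')
    (h₁ : ∀ k, c₁' * ‖gbar k‖ ^ 2 ≤ -⟪gbar k, s k⟫)
    (h₂ : ∀ k, ‖s k‖ ≤ c₂' * ‖gbar k‖)
    (herr : ∀ k, ‖gbar k - gradient F (z k)‖ ≤ ζ * ‖gbar k‖) :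
    ∀ k, (c₁' - ζ * c₂') / (1 + ζ) ^ 2 * ‖gradient F (z k)‖ ^ 2
        ≤ -⟪gradient F (z k), s k⟫ ∧
      ‖s k‖ ≤ c₂' / (1 - ζ) * ‖gradient F (z k)‖ := by
  intro k
  set g := gbar k with hgdef
  set d := gradient F (z k) with hddef
  have he := herr k
  have h1 := h₁ k
  have h2 := h₂ k
  have hc12 : ζ * c₂' < c₁' := (lt_div_iff₀ hc₂').mp hζlt
  by_cases hg : g = 0
  · have hg' : gbar k = 0 := hg
    have hs : s k = 0 := by
      have h0 : ‖s k‖ ≤ 0 := by simpa [hg'] using h2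
      exact norm_le_zero_iff.mp h0
    have hd : gradient F (z k) = 0 := by
      have h0 : ‖gradient F (z k)‖ ≤ 0 := by simpa [hg'] using he
      exact norm_le_zero_iff.mp h0
    rw [show d = gradient F (z k) from rfl, hd]
    simp [hs]
  · have hgpos : 0 < ‖g‖ := norm_pos_iff.mpr hg
    have hCS : -⟪g, s k⟫ ≤ ‖g‖ * ‖s k‖ := by
      calc -⟪g, s k⟫ ≤ |⟪g, s k⟫| := neg_le_abs _
        _ ≤ ‖g‖ * ‖s k‖ := abs_real_inner_le_norm _ _
    have hcs : c₁' ≤ c₂' := by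
      nlinarith [mul_le_mul_of_nonneg_left h2 hgpos.le, mul_pos hgpos hgpos, sq_nonneg ‖g‖]
    have hζ1 : ζ < 1 := lt_of_lt_of_le hζlt ((div_le_one hc₂').mpr hcs)
    have hub : ‖d‖ ≤ (1 + ζ) * ‖g‖ := by
      have h3 : ‖d‖ ≤ ‖g‖ + ‖g - d‖ := by
        calc ‖d‖ = ‖g - (g - d)‖ := by rw [sub_sub_cancel]
          _ ≤ ‖g‖ + ‖g - d‖ := norm_sub_le _ _
      nlinarith
    have hlb : (1 - ζ) * ‖g‖ ≤ ‖d‖ := by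
      have h3 : ‖g‖ ≤ ‖d‖ + ‖g - d‖ := by
        calc ‖g‖ = ‖d + (g - d)‖ := by congr 1; abel
          _ ≤ ‖d‖ + ‖g - d‖ := norm_add_le _ _
      nlinarith
    have hCS2 : -⟪g - d, s k⟫ ≤ ‖g - d‖ * ‖s k‖ := by
      calc -⟪g - d, s k⟫ ≤ |⟪g - d, s k⟫| := neg_le_abs _
        _ ≤ ‖g - d‖ * ‖s k‖ := abs_real_inner_le_norm _ _
    have hsplit : -⟪d, s k⟫ = -⟪g, s k⟫ + ⟪g - d, s k⟫ := by
      rw [inner_sub_left]; ring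
    have key : (c₁' - ζ * c₂') * ‖g‖ ^ 2 ≤ -⟪d, s k⟫ := by
      rw [hsplit]
      have hsn : 0 ≤ ‖s k‖ := norm_nonneg _
      have hgd : 0 ≤ ‖g - d‖ := norm_nonneg _
      nlinarith [mul_le_mul he h2 hsn (by positivity : (0:ℝ) ≤ ζ * ‖g‖)]
    constructor
    · have hdnn : 0 ≤ ‖d‖ := norm_nonneg _
      have h4 : ‖d‖ ^ 2 ≤ (1 + ζ) ^ 2 * ‖g‖ ^ 2 := by nlinarith
      have hpos : 0 < (1 + ζ) ^ 2 := by positivity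
      calc (c₁' - ζ * c₂') / (1 + ζ) ^ 2 * ‖d‖ ^ 2
          ≤ (c₁' - ζ * c₂') / (1 + ζ) ^ 2 * ((1 + ζ) ^ 2 * ‖g‖ ^ 2) := by
            apply mul_le_mul_of_nonneg_left h4 (div_nonneg (by linarith) (by positivity))
        _ = (c₁' - ζ * c₂') * ‖g‖ ^ 2 := by field_simp
        _ ≤ -⟪d, s k⟫ := key
    · rw [div_mul_eq_mul_div, le_div_iff₀ (by linarith : (0:ℝ) < 1 - ζ)]
      nlinarith
end

section
/- Let F̃ : ℝ^m → ℝ be continuously differentiable with L-Lipschitz gradient, let (z_k) be generated by z_{k+1} = z_k + t_k s_k with t_k > 0, and suppose ‖s_k‖₂ ≤ c₂‖∇F̃(z_k)‖₂ for a constant c₂ > 0 and all k. If ∑_{k=0}^∞ t_k‖∇F̃(z_k)‖₂² < ∞ and liminf_{k→∞} ‖∇F̃(z_k)‖₂ = 0, then lim_{k→∞} ‖∇F̃(z_k)‖₂ = 0. -/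
open Filter

theorem stmt12 {m : ℕ} (F : EuclideanSpace ℝ (Fin m) → ℝ) (L : ℝ)
    (hF : ContDiff ℝ 1 F)
    (hL : ∀ x y, ‖gradient F x - gradient F y‖ ≤ L * ‖x - y‖)
    (z s : ℕ → EuclideanSpace ℝ (Fin m)) (t : ℕ → ℝ) (ht : ∀ k, 0 < t k)
    (hiter : ∀ k, z (k + 1) = z k + t k • s k)
    (c₂ : ℝ) (hc₂ : 0 < c₂)
    (h₂ : ∀ k, ‖s k‖ ≤ c₂ * ‖gradient F (z k)‖)
    (hsum : Summable (fun k => t k * ‖gradient F (z k)‖ ^ 2))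
    (hliminf : liminf (fun k => ‖gradient F (z k)‖) atTop = 0) :
    Tendsto (fun k => ‖gradient F (z k)‖) atTop (nhds 0) := by
  classical
  set g : ℕ → ℝ := fun k => ‖gradient F (z k)‖ with hgdef
  have hgnn : ∀ k, 0 ≤ g k := fun k => norm_nonneg _
  set L₀ : ℝ := max L 1 with hL₀def
  have hL₀pos : (0:ℝ) < L₀ := lt_of_lt_of_le one_pos (le_max_right _ _)
  have hL₀ : ∀ x y, ‖gradient F x - gradient F y‖ ≤ L₀ * ‖x - y‖ := fun x y =>
    (hL x y).trans (mul_le_mul_of_nonneg_right (le_max_left _ _) (norm_nonneg _))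
  -- step norm
  have hstep : ∀ k, ‖z (k+1) - z k‖ = t k * ‖s k‖ := by
    intro k
    rw [hiter k, add_sub_cancel_left, norm_smul, Real.norm_of_nonneg (ht k).le]
  -- telescoping bound
  have hzdiff : ∀ l n, l ≤ n → ‖z n - z l‖ ≤ ∑ k ∈ Finset.Ico l n, t k * ‖s k‖ := by
    intro l n hln
    induction n, hln using Nat.le_induction with
    | base => simp
    | succ n hln ih =>
      rw [Finset.sum_Ico_succ_top hln]
      have heq : z (n+1) - z l = (z (n+1) - z n) + (z n - z l) := by abel
      calc ‖z (n+1) - z l‖ ≤ ‖z (n+1) - z n‖ + ‖z n - z l‖ := by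
            rw [heq]; exact norm_add_le _ _
        _ ≤ t n * ‖s n‖ + ∑ k ∈ Finset.Ico l n, t k * ‖s k‖ := by
            rw [hstep n]; exact add_le_add le_rfl ih
        _ = ∑ k ∈ Finset.Ico l n, t k * ‖s k‖ + t n * ‖s n‖ := by ring
  -- key inequality
  have key : ∀ l n, l ≤ n →
      |g l - g n| ≤ L₀ * c₂ * ∑ k ∈ Finset.Ico l n, t k * g k := by
    intro l n hln
    calc |g l - g n| ≤ ‖gradient F (z l) - gradient F (z n)‖ := abs_norm_sub_norm_le _ _
      _ ≤ L₀ * ‖z l - z n‖ := hL₀ _ _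
      _ = L₀ * ‖z n - z l‖ := by rw [norm_sub_rev]
      _ ≤ L₀ * ∑ k ∈ Finset.Ico l n, t k * ‖s k‖ :=
          mul_le_mul_of_nonneg_left (hzdiff l n hln) hL₀pos.le
      _ ≤ L₀ * ∑ k ∈ Finset.Ico l n, t k * (c₂ * g k) := by
          gcongr with k hk
          · exact (ht k).le
          · exact h₂ k
      _ = L₀ * c₂ * ∑ k ∈ Finset.Ico l n, t k * g k := by
          simp only [Finset.mul_sum]
          exact Finset.sum_congr rfl fun k _ => by ring
  by_cases hB : ∀ δ > (0:ℝ), ∀ M : ℕ, ∃ n ≥ M, g n < δ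
  · -- frequently small case
    rw [Metric.tendsto_atTop]
    intro ε hε
    set C : ℝ := L₀ * c₂ with hCdef
    have hC : 0 < C := mul_pos hL₀pos hc₂
    set b : ℝ := ε^2 / (4*C) with hbdef
    have hb : 0 < b := by positivity
    obtain ⟨s₀, hs₀⟩ := summable_iff_vanishing.mp hsum (Set.Iio b) (Iio_mem_nhds hb)
    obtain ⟨N, hN⟩ := s₀.exists_nat_subset_range
    have htail : ∀ u : Finset ℕ, (∀ k ∈ u, N ≤ k) → ∑ k ∈ u, t k * g k ^ 2 < b := by
      intro u hu
      have hdisj : Disjoint u s₀ := by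
        rw [Finset.disjoint_left]
        intro k hk hk'
        have h1 := hu k hk
        have h2 := Finset.mem_range.mp (hN hk')
        omega
      exact hs₀ u hdisj
    refine ⟨N, fun n hn => ?_⟩
    rw [Real.dist_eq, sub_zero, abs_of_nonneg (hgnn n)]
    by_contra hcon
    push_neg at hcon
    -- ε ≤ g n ; find minimal m > n with g m < ε/2
    have hex : ∃ m, n < m ∧ g m < ε/2 := by
      obtain ⟨m', hm1, hm2⟩ := hB (ε/2) (by positivity) (n+1)
      exact ⟨m', hm1, hm2⟩
    set M := Nat.find hex with hMdef
    obtain ⟨hM1, hM2⟩ := Nat.find_spec hex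
    have hmid : ∀ k, n ≤ k → k < M → ε/2 ≤ g k := by
      intro k hk1 hk2
      rcases eq_or_lt_of_le hk1 with rfl | hlt
      · linarith
      · by_contra h
        push_neg at h
        exact Nat.find_min hex hk2 ⟨hlt, h⟩
    have h1 := key n M hM1.le
    have h2 : ∑ k ∈ Finset.Ico n M, t k * g k
        ≤ (2/ε) * ∑ k ∈ Finset.Ico n M, t k * g k ^ 2 := by
      rw [Finset.mul_sum]
      apply Finset.sum_le_sum
      intro k hk
      obtain ⟨hk1, hk2⟩ := Finset.mem_Ico.mp hk
      have hk' := hmid k hk1 hk2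
      have h1' : ε ≤ 2 * g k := by linarith
      have h2' : 0 ≤ t k * g k := mul_nonneg (ht k).le (hgnn k)
      rw [div_mul_eq_mul_div, le_div_iff₀ hε]
      nlinarith [mul_le_mul_of_nonneg_left h1' h2']
    have h3 : ∑ k ∈ Finset.Ico n M, t k * g k ^ 2 < b :=
      htail _ (fun k hk => le_trans hn (Finset.mem_Ico.mp hk).1)
    have h4 : ε/2 ≤ |g n - g M| := by
      rw [abs_of_nonneg (by linarith)]
      linarith
    have h5 : C * ∑ k ∈ Finset.Ico n M, t k * g k
        ≤ C * ((2/ε) * ∑ k ∈ Finset.Ico n M, t k * g k ^ 2) :=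
      mul_le_mul_of_nonneg_left h2 hC.le
    have h6 : C * ((2/ε) * ∑ k ∈ Finset.Ico n M, t k * g k ^ 2)
        < C * ((2/ε) * b) := by
      have : (0:ℝ) < C * (2/ε) := by positivity
      calc C * ((2/ε) * ∑ k ∈ Finset.Ico n M, t k * g k ^ 2)
          = C * (2/ε) * ∑ k ∈ Finset.Ico n M, t k * g k ^ 2 := by ring
        _ < C * (2/ε) * b := mul_lt_mul_of_pos_left h3 this
        _ = C * ((2/ε) * b) := by ring
    have h7 : C * ((2/ε) * b) = ε/2 := by
      rw [hbdef]
      field_simp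
      ring
    linarith
  · -- eventually bounded below case: z is Cauchy
    push_neg at hB
    obtain ⟨δ, hδ, M, hM⟩ := hB
    have hM' : ∀ n, M ≤ n → δ ≤ g n := fun n hn => (hM n hn)
    have hdistle : ∀ n, M ≤ n →
        dist (z n) (z (n+1)) ≤ (c₂/δ) * (t n * g n ^ 2) := by
      intro n hn
      have hgn := hM' n hn
      rw [dist_eq_norm, norm_sub_rev, hstep n]
      have h1 : t n * ‖s n‖ ≤ t n * (c₂ * g n) :=
        mul_le_mul_of_nonneg_left (h₂ n) (ht n).le
      have h2 : t n * (c₂ * g n) ≤ (c₂/δ) * (t n * g n ^ 2) := by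
        rw [div_mul_eq_mul_div, le_div_iff₀ hδ]
        nlinarith [mul_le_mul_of_nonneg_left hgn (mul_nonneg (mul_nonneg (ht n).le hc₂.le) hδ.le),
          mul_nonneg (ht n).le hc₂.le]
      linarith
    have hsum2 : Summable (fun n => dist (z n) (z (n+1))) := by
      rw [← summable_nat_add_iff M]
      apply Summable.of_nonneg_of_le (fun n => dist_nonneg)
        (fun n => hdistle (n + M) (Nat.le_add_left M n))
      have := (summable_nat_add_iff M).mpr hsum
      exact this.mul_left (c₂/δ)
    have hcauchy : CauchySeq z := cauchySeq_of_summable_dist hsum2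
    obtain ⟨w, hw⟩ := cauchySeq_tendsto_of_complete hcauchy
    have hlip : LipschitzWith (Real.toNNReal L₀) (fun x => gradient F x) := by
      apply LipschitzWith.of_dist_le_mul
      intro x y
      rw [dist_eq_norm]
      calc ‖gradient F x - gradient F y‖ ≤ L₀ * ‖x - y‖ := hL₀ x y
        _ = (Real.toNNReal L₀) * dist x y := by
            rw [Real.coe_toNNReal L₀ hL₀pos.le, dist_eq_norm]
    have hcont : Continuous fun x => ‖gradient F x‖ := hlip.continuous.norm
    have hgl : Tendsto g atTop (nhds ‖gradient F w‖) :=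
      (hcont.tendsto w).comp hw
    have hlim0 : ‖gradient F w‖ = 0 := by
      rw [← hliminf]
      exact (hgl.liminf_eq).symm
    rw [hgdef]
    rw [hlim0] at hgl
    exact hgl
end

section
/- Let F̃ : ℝ^m → ℝ be continuously differentiable with L-Lipschitz gradient and F̃(z_k) ≥ F̃_inf for all k, where (z_k) is generated by z_{k+1} = z_k + t_k s_k. Suppose the directions satisfy the exact general direction conditions c₁‖∇F̃(z_k)‖₂² ≤ −⟨∇F̃(z_k), s_k⟩ and ‖s_k‖₂ ≤ c₂‖∇F̃(z_k)‖₂ with c₁, c₂ > 0 for all k, and that the positive step sizes satisfy t_k → 0 and ∑_{k=0}^∞ t_k = ∞. Then ∇F̃(z_k) → 0 as k → ∞, and every limit point of (z_k) is a stationary point of F̃. -/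
open Filter
open scoped RealInnerProductSpace


lemma toDual_eq_innerSL {m : ℕ} (a : EuclideanSpace ℝ (Fin m)) :
    (InnerProductSpace.toDual ℝ _ a : EuclideanSpace ℝ (Fin m) →L[ℝ] ℝ) = innerSL ℝ a := by
  ext v; simp [InnerProductSpace.toDual_apply_apply]

lemma descent_lemma {m : ℕ} (F : EuclideanSpace ℝ (Fin m) → ℝ) (L : ℝ) (hL0 : 0 ≤ L)
    (hF : ContDiff ℝ 1 F)
    (hL : ∀ x y, ‖gradient F x - gradient F y‖ ≤ L * ‖x - y‖)
    (x y : EuclideanSpace ℝ (Fin m)) :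
    F y ≤ F x + ⟪gradient F x, y - x⟫ + L * ‖y - x‖ ^ 2 := by
  set a := gradient F x with ha
  set G : EuclideanSpace ℝ (Fin m) → ℝ := fun p => F p - ⟪a, p⟫ with hG
  have hdiff := hF.differentiable one_ne_zero
  have hder : ∀ p ∈ segment ℝ x y,
      HasFDerivWithinAt G (fderiv ℝ F p - innerSL ℝ a) (segment ℝ x y) p := by
    intro p _
    exact (((hdiff p).hasFDerivAt).sub ((innerSL ℝ a).hasFDerivAt)).hasFDerivWithinAt
  have hnorm : ∀ p, ‖fderiv ℝ F p - innerSL ℝ a‖ = ‖gradient F p - a‖ := by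
    intro p
    have h1 : fderiv ℝ F p = InnerProductSpace.toDual ℝ _ (gradient F p) := by
      rw [gradient, (InnerProductSpace.toDual ℝ _).apply_symm_apply]
    rw [h1, ← toDual_eq_innerSL, ← map_sub, (InnerProductSpace.toDual ℝ _).norm_map]
  have hbound : ∀ p ∈ segment ℝ x y, ‖fderiv ℝ F p - innerSL ℝ a‖ ≤ L * ‖y - x‖ := by
    intro p hp
    rw [hnorm]
    refine (hL p x).trans ?_
    have : ‖p - x‖ ≤ ‖y - x‖ := by
      obtain ⟨u, v, hu, hv, huv, rfl⟩ := hp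
      have : u • x + v • y - x = v • (y - x) := by
        have : u = 1 - v := by linarith
        rw [this]; module
      rw [this, norm_smul, Real.norm_eq_abs, abs_of_nonneg hv]
      nlinarith [norm_nonneg (y - x)]
    nlinarith
  have key := (convex_segment x y).norm_image_sub_le_of_norm_hasFDerivWithin_le hder hbound
    (right_mem_segment ℝ x y) (left_mem_segment ℝ x y)
  have hGyx : G y - G x = F y - F x - ⟪a, y - x⟫ := by
    simp only [hG, inner_sub_right]; ring
  rw [Real.norm_eq_abs] at key
  have habs := abs_le.mp key
  have h2 : L * ‖y - x‖ * ‖x - y‖ = L * ‖y - x‖ ^ 2 := by rw [norm_sub_rev x y]; ring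
  linarith [habs.1, h2, hGyx]


lemma aux_tendsto (u w t : ℕ → ℝ) (b : ℝ) (hb : 0 ≤ b)
    (hu : ∀ k, 0 ≤ u k) (ht : ∀ k, 0 < t k)
    (hw : ∀ k, w k = t k * u k)
    (hsum : Summable w)
    (N₀ : ℕ) (hrec : ∀ k, N₀ ≤ k → u (k + 1) ≤ u k + b * w k)
    (htsum : Tendsto (fun K => ∑ k ∈ Finset.range K, t k) atTop atTop) :
    Tendsto u atTop (nhds 0) := by
  have hwnn : ∀ k, 0 ≤ w k := fun k => (hw k) ▸ mul_nonneg (ht k).le (hu k)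
  have main : ∀ ε > (0:ℝ), ∃ N, ∀ n ≥ N, u n ≤ ε := by
    intro ε hε
    set δ := ε / (2 * (b + 1)) with hδdef
    have hδ : 0 < δ := by positivity
    -- tail sums small
    have htail := tendsto_sum_nat_add w
    have hev : ∀ᶠ n in atTop, ∑' k, w (k + n) < δ := by
      have := htail.eventually (gt_mem_nhds hδ)
      exact this
    obtain ⟨N₁, hN₁ge, hN₁⟩ : ∃ N₁, N₀ ≤ N₁ ∧ ∑' k, w (k + N₁) < δ := by
      obtain ⟨N, hN⟩ := (hev.and (eventually_ge_atTop N₀)).exists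
      exact ⟨N, hN.2, hN.1⟩
    set S := ∑' k, w (k + N₁) with hS
    have hsumshift : Summable (fun k => w (k + N₁)) := (summable_nat_add_iff N₁).2 hsum
    -- partial sums of w over Ico N₁ j bounded by S
    have hIco : ∀ j, ∑ i ∈ Finset.Ico N₁ j, w i ≤ S := by
      intro j
      rcases le_or_gt N₁ j with hj | hj
      · rw [Finset.sum_Ico_eq_sum_range]
        have : ∀ i ∈ Finset.range (j - N₁), w (N₁ + i) = w (i + N₁) := by
          intro i _; rw [Nat.add_comm]
        rw [Finset.sum_congr rfl this]
        exact Summable.sum_le_tsum _ (fun i _ => hwnn _) hsumshift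
      · rw [Finset.Ico_eq_empty (by omega)]
        simp [hS]
        exact tsum_nonneg (fun i => hwnn _)
    -- telescoping: for k ≥ N₁ and j ≥ k, u j ≤ u k + b * S
    have htel : ∀ k, N₁ ≤ k → ∀ j, k ≤ j → u j ≤ u k + b * S := by
      intro k hk j hj
      have key : ∀ d, u (k + d) ≤ u k + b * ∑ i ∈ Finset.Ico k (k + d), w i := by
        intro d
        induction d with
        | zero => simp
        | succ d ih =>
          have hrk : u (k + d + 1) ≤ u (k + d) + b * w (k + d) :=
            hrec (k + d) (le_trans hN₁ge (le_trans hk (Nat.le_add_right _ _)))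
          have hsplit : ∑ i ∈ Finset.Ico k (k + d + 1), w i
              = ∑ i ∈ Finset.Ico k (k + d), w i + w (k + d) :=
            Finset.sum_Ico_succ_top (by omega) w
          rw [show k + (d+1) = k + d + 1 by omega, hsplit]
          calc u ((k+d)+1) ≤ u (k+d) + b * w (k+d) := hrk
            _ ≤ (u k + b * ∑ i ∈ Finset.Ico k (k + d), w i) + b * w (k+d) := by
                linarith
            _ = u k + b * (∑ i ∈ Finset.Ico k (k + d), w i + w (k+d)) := by ring
      obtain ⟨d, rfl⟩ := Nat.exists_eq_add_of_le hj
      refine (key d).trans ?_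
      have h1 : ∑ i ∈ Finset.Ico k (k + d), w i ≤ S := by
        refine le_trans ?_ (hIco (k + d))
        exact Finset.sum_le_sum_of_subset_of_nonneg
          (Finset.Ico_subset_Ico hk le_rfl) (fun i _ _ => hwnn i)
      nlinarith
    -- there exists k₀ ≥ N₁ with u k₀ ≤ ε / 2
    obtain ⟨k₀, hk₀ge, hk₀⟩ : ∃ k₀, N₁ ≤ k₀ ∧ u k₀ ≤ ε / 2 := by
      by_contra hcon
      push_neg at hcon
      -- then t k ≤ (2/ε) * w k for k ≥ N₁, so partial sums of t bounded
      have hbound : ∀ K, ∑ k ∈ Finset.range K, t k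
          ≤ (∑ i ∈ Finset.range N₁, t i) + (2 / ε) * S := by
        intro K
        rcases le_or_gt K N₁ with hK | hK
        · have h1 : ∑ k ∈ Finset.range K, t k ≤ ∑ i ∈ Finset.range N₁, t i :=
            Finset.sum_le_sum_of_subset_of_nonneg
              (Finset.range_subset_range.2 hK) (fun i _ _ => (ht i).le)
          have h2 : 0 ≤ (2 / ε) * S := by
            have : 0 ≤ S := tsum_nonneg (fun i => hwnn _)
            positivity
          linarith
        · rw [show K = N₁ + (K - N₁) by omega, Finset.sum_range_add]
          have h1 : ∑ i ∈ Finset.range (K - N₁), t (N₁ + i)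
              ≤ (2/ε) * ∑ i ∈ Finset.range (K - N₁), w (N₁ + i) := by
            rw [Finset.mul_sum]
            refine Finset.sum_le_sum (fun i _ => ?_)
            have h3 : ε / 2 < u (N₁ + i) := hcon _ (Nat.le_add_right _ _)
            have h4 := ht (N₁ + i)
            rw [hw]
            rw [div_mul_eq_mul_div, le_div_iff₀ hε]
            nlinarith
          have h2 : ∑ i ∈ Finset.range (K - N₁), w (N₁ + i) ≤ S := by
            have : ∀ i ∈ Finset.range (K - N₁), w (N₁ + i) = w (i + N₁) := by
              intro i _; rw [Nat.add_comm]
            rw [Finset.sum_congr rfl this]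
            exact Summable.sum_le_tsum _ (fun i _ => hwnn _) hsumshift
          have h5 : (0:ℝ) < 2 / ε := by positivity
          nlinarith
      obtain ⟨K, hK⟩ := (htsum.eventually_ge_atTop
        ((∑ i ∈ Finset.range N₁, t i) + (2 / ε) * S + 1)).exists
      linarith [hbound K]
    refine ⟨k₀, fun n hn => ?_⟩
    have := htel k₀ hk₀ge n hn
    have hbS : b * S ≤ ε / 2 := by
      have hSδ : S ≤ δ := (le_of_lt hN₁)
      have hSnn : 0 ≤ S := tsum_nonneg (fun i => hwnn _)
      have : b * S ≤ b * δ := by nlinarith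
      have hbδ : b * δ ≤ ε / 2 := by
        have h2b : (0:ℝ) < 2 * (b + 1) := by positivity
        rw [hδdef, ← mul_div_assoc, div_le_div_iff₀ h2b two_pos]
        nlinarith
      linarith
    linarith
  rw [Metric.tendsto_atTop]
  intro ε hε
  obtain ⟨N, hN⟩ := main (ε/2) (by positivity)
  refine ⟨N, fun n hn => ?_⟩
  rw [Real.dist_eq, sub_zero, abs_of_nonneg (hu n)]
  linarith [hN n hn]


theorem stmt13 {m : ℕ} (F : EuclideanSpace ℝ (Fin m) → ℝ) (L : ℝ)
    (hF : ContDiff ℝ 1 F)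
    (hL : ∀ x y, ‖gradient F x - gradient F y‖ ≤ L * ‖x - y‖)
    (Finf : ℝ) (z s : ℕ → EuclideanSpace ℝ (Fin m)) (t : ℕ → ℝ)
    (hlow : ∀ k, Finf ≤ F (z k))
    (ht : ∀ k, 0 < t k)
    (hiter : ∀ k, z (k + 1) = z k + t k • s k)
    (c₁ c₂ : ℝ) (hc₁ : 0 < c₁) (hc₂ : 0 < c₂)
    (h₁ : ∀ k, c₁ * ‖gradient F (z k)‖ ^ 2 ≤ -⟪gradient F (z k), s k⟫)
    (h₂ : ∀ k, ‖s k‖ ≤ c₂ * ‖gradient F (z k)‖)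
    (htzero : Tendsto t atTop (nhds 0))
    (htsum : Tendsto (fun K => ∑ k ∈ Finset.range K, t k) atTop atTop) :
    Tendsto (fun k => gradient F (z k)) atTop (nhds 0) ∧
      ∀ zstar : EuclideanSpace ℝ (Fin m),
        (∃ φ : ℕ → ℕ, StrictMono φ ∧ Tendsto (z ∘ φ) atTop (nhds zstar)) →
        gradient F zstar = 0 := by
  have hL'0 : (0:ℝ) ≤ max L 0 := le_max_right _ _
  set L' := max L 0 with hL'def
  have hL' : ∀ x y, ‖gradient F x - gradient F y‖ ≤ L' * ‖x - y‖ := fun x y =>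
    (hL x y).trans (mul_le_mul_of_nonneg_right (le_max_left _ _) (norm_nonneg _))
  have hdescent := descent_lemma F L' hL'0 hF hL'
  set u : ℕ → ℝ := fun k => ‖gradient F (z k)‖ ^ 2 with hu
  set w : ℕ → ℝ := fun k => t k * u k with hwdef
  have hunn : ∀ k, 0 ≤ u k := fun k => sq_nonneg _
  have hwnn : ∀ k, 0 ≤ w k := fun k => mul_nonneg (ht k).le (hunn k)
  -- per-step descent
  have hstep : ∀ k, F (z (k+1)) ≤ F (z k) - c₁ * (t k * u k)
      + (L' * c₂^2 * t k) * (t k * u k) := by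
    intro k
    have hd := hdescent (z k) (z (k+1))
    have hz : z (k+1) - z k = t k • s k := by rw [hiter k]; abel
    rw [hz] at hd
    have hinner : ⟪gradient F (z k), t k • s k⟫ = t k * ⟪gradient F (z k), s k⟫ :=
      real_inner_smul_right _ _ _
    have hnorm : ‖t k • s k‖ = t k * ‖s k‖ := by
      rw [norm_smul, Real.norm_eq_abs, abs_of_pos (ht k)]
    rw [hinner, hnorm] at hd
    have hi : t k * ⟪gradient F (z k), s k⟫ ≤ t k * (-(c₁ * u k)) := by
      have := h₁ k
      have h' : ⟪gradient F (z k), s k⟫ ≤ -(c₁ * u k) := by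
        simp only [hu]; linarith
      exact mul_le_mul_of_nonneg_left h' (ht k).le
    have hs2 : ‖s k‖^2 ≤ c₂^2 * u k := by
      have := h₂ k
      simp only [hu]
      nlinarith [norm_nonneg (s k), norm_nonneg (gradient F (z k))]
    have h6 : (L' * t k^2) * ‖s k‖^2 ≤ (L' * t k^2) * (c₂^2 * u k) :=
      mul_le_mul_of_nonneg_left hs2 (mul_nonneg hL'0 (sq_nonneg _))
    nlinarith [hd, hi, h6]
  -- choose N₀ with small steps
  obtain ⟨N₀, hN₀⟩ : ∃ N₀, ∀ k, N₀ ≤ k →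
      L' * c₂^2 * t k ≤ c₁ / 2 ∧ L' * c₂ * t k ≤ 1 := by
    have hδ : (0:ℝ) < min (c₁ / (2 * (L' * c₂^2 + 1))) (1 / (L' * c₂ + 1)) := by
      have h1 : (0:ℝ) < L' * c₂^2 + 1 := by positivity
      have h2 : (0:ℝ) < L' * c₂ + 1 := by positivity
      have : (0:ℝ) < c₁ / (2 * (L' * c₂^2 + 1)) := by positivity
      have : (0:ℝ) < 1 / (L' * c₂ + 1) := by positivity
      simp only [lt_min_iff]; constructor <;> positivity
    have hev := (htzero.eventually (gt_mem_nhds hδ))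
    rw [eventually_atTop] at hev
    obtain ⟨N₀, hN⟩ := hev
    refine ⟨N₀, fun k hk => ?_⟩
    have hk' := hN k hk
    rw [lt_min_iff] at hk'
    have hA : t k < c₁ / (2 * (L' * c₂^2 + 1)) := hk'.1
    have hB : t k < 1 / (L' * c₂ + 1) := hk'.2
    have h1 : (0:ℝ) < 2 * (L' * c₂^2 + 1) := by positivity
    have h2 : (0:ℝ) < L' * c₂ + 1 := by positivity
    have hnn1 : (0:ℝ) ≤ L' * c₂^2 := by positivity
    have hnn2 : (0:ℝ) ≤ L' * c₂ := by positivity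
    constructor
    · rw [lt_div_iff₀ h1] at hA
      nlinarith [(ht k).le]
    · rw [lt_div_iff₀ h2] at hB
      nlinarith [(ht k).le]
  -- effective descent
  have hdesc : ∀ k, N₀ ≤ k → F (z (k+1)) ≤ F (z k) - (c₁/2) * w k := by
    intro k hk
    have h1 := hstep k
    have h2 := (hN₀ k hk).1
    have h3 : 0 ≤ t k * u k := mul_nonneg (ht k).le (hunn k)
    have h4 : (L' * c₂^2 * t k) * (t k * u k) ≤ (c₁/2) * (t k * u k) :=
      mul_le_mul_of_nonneg_right h2 h3
    simp only [hwdef]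
    linarith
  -- telescoping
  have key : ∀ K, N₀ ≤ K →
      F (z K) + (c₁/2) * ∑ i ∈ Finset.Ico N₀ K, w i ≤ F (z N₀) := by
    intro K hK
    induction K, hK using Nat.le_induction with
    | base => simp
    | succ K hK ih =>
      have hd := hdesc K hK
      rw [Finset.sum_Ico_succ_top hK]
      linarith
  -- summability of w
  have hsumw : Summable w := by
    apply summable_of_sum_range_le hwnn
    intro K
    show ∑ i ∈ Finset.range K, w i
        ≤ (∑ i ∈ Finset.range N₀, w i) + (2/c₁) * (F (z N₀) - Finf)
    have hFdiff : 0 ≤ (2/c₁) * (F (z N₀) - Finf) := by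
      have := hlow N₀
      have : (0:ℝ) ≤ F (z N₀) - Finf := by linarith
      positivity
    rcases le_or_gt K N₀ with hK | hK
    · have h1 : ∑ i ∈ Finset.range K, w i ≤ ∑ i ∈ Finset.range N₀, w i :=
        Finset.sum_le_sum_of_subset_of_nonneg (Finset.range_subset_range.2 hK)
          (fun i _ _ => hwnn i)
      linarith
    · have hsplit : ∑ i ∈ Finset.range K, w i
          = (∑ i ∈ Finset.range N₀, w i) + ∑ i ∈ Finset.Ico N₀ K, w i := by
        rw [Finset.range_eq_Ico, Finset.range_eq_Ico]
        exact (Finset.sum_Ico_consecutive w (Nat.zero_le N₀) hK.le).symm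
      have hkey := key K hK.le
      have hlo := hlow K
      have h2 : ∑ i ∈ Finset.Ico N₀ K, w i ≤ (2/c₁) * (F (z N₀) - Finf) := by
        rw [div_mul_eq_mul_div, le_div_iff₀ hc₁]
        linarith
      linarith [hsplit, h2]
  -- recursion on u
  have hrec : ∀ k, N₀ ≤ k → u (k+1) ≤ u k + (3 * (L' * c₂)) * w k := by
    intro k hk
    have hB := (hN₀ k hk).2
    have hg1 : ‖gradient F (z (k+1))‖
        ≤ ‖gradient F (z k)‖ + L' * c₂ * t k * ‖gradient F (z k)‖ := by
      have h1 : ‖gradient F (z (k+1))‖ - ‖gradient F (z k)‖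
          ≤ ‖gradient F (z (k+1)) - gradient F (z k)‖ := norm_sub_norm_le _ _
      have h2 := hL' (z (k+1)) (z k)
      have hz : z (k+1) - z k = t k • s k := by rw [hiter k]; abel
      rw [hz, norm_smul, Real.norm_eq_abs, abs_of_pos (ht k)] at h2
      have h3 : L' * (t k * ‖s k‖) ≤ L' * (t k * (c₂ * ‖gradient F (z k)‖)) := by
        have := h₂ k
        have h4 : t k * ‖s k‖ ≤ t k * (c₂ * ‖gradient F (z k)‖) :=
          mul_le_mul_of_nonneg_left this (ht k).le
        exact mul_le_mul_of_nonneg_left h4 hL'0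
      nlinarith
    have hgnn : (0:ℝ) ≤ ‖gradient F (z (k+1))‖ := norm_nonneg _
    have hgnn2 : (0:ℝ) ≤ ‖gradient F (z k)‖ := norm_nonneg _
    have hxnn : (0:ℝ) ≤ L' * c₂ * t k := by
      have : (0:ℝ) ≤ L' * c₂ := by positivity
      exact mul_nonneg this (ht k).le
    have hsq : u (k+1) ≤ (1 + L' * c₂ * t k)^2 * u k := by
      simp only [hu]
      nlinarith [hg1, hgnn, hgnn2]
    have hxle : L' * c₂ * t k ≤ 1 := by
      have : L' * c₂ * t k = L' * c₂ * t k := rfl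
      linarith [hB, mul_assoc L' c₂ (t k) ▸ hB]
    simp only [hwdef]
    nlinarith [hunn k, hxnn, hxle, mul_nonneg hxnn (hunn k)]
  -- conclude u → 0
  have hu0 : Tendsto u atTop (nhds 0) := by
    refine aux_tendsto u w t (3 * (L' * c₂)) (by positivity) hunn ht (fun k => rfl)
      hsumw N₀ hrec htsum
  have hgn0 : Tendsto (fun k => ‖gradient F (z k)‖) atTop (nhds 0) := by
    have hsqrt : Tendsto (fun k => Real.sqrt (u k)) atTop (nhds (Real.sqrt 0)) :=
      (Real.continuous_sqrt.tendsto 0).comp hu0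
    rw [Real.sqrt_zero] at hsqrt
    refine hsqrt.congr (fun k => ?_)
    simp only [hu]
    rw [Real.sqrt_sq (norm_nonneg _)]
  have hmain : Tendsto (fun k => gradient F (z k)) atTop (nhds 0) :=
    tendsto_zero_iff_norm_tendsto_zero.mpr hgn0
  refine ⟨hmain, ?_⟩
  rintro zstar ⟨φ, hφ, hconv⟩
  have h1 : Tendsto (fun k => gradient F (z (φ k))) atTop (nhds 0) :=
    hmain.comp hφ.tendsto_atTop
  have h2 : Tendsto (fun k => gradient F (z (φ k))) atTop (nhds (gradient F zstar)) := by
    rw [tendsto_iff_norm_sub_tendsto_zero]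
    have hb : ∀ k, ‖gradient F (z (φ k)) - gradient F zstar‖ ≤ L' * ‖z (φ k) - zstar‖ :=
      fun k => hL' _ _
    have hz : Tendsto (fun k => L' * ‖z (φ k) - zstar‖) atTop (nhds 0) := by
      have := (tendsto_iff_norm_sub_tendsto_zero.mp hconv).const_mul L'
      simpa using this
    exact squeeze_zero (fun k => norm_nonneg _) hb hz
  exact tendsto_nhds_unique h2 h1
end
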